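/- arXiv:2407.03756 — 2 statements merged into one kernel-verified Lean document; each statement's English description precedes it below -/
import Mathlib

section
/- Departure-step preservation: if x, y ∈ ℕ₀^c satisfy β_n(x) ≤ β_n(y) for all n ∈ ℕ₀, x' = x − e_i with x^i = l ≥ 1, y' = y − e_j with y^j = m ≥ 1, and α_l(x) < α_{m−1}(y), then β_n(x') ≤ β_n(y') for all n ∈ ℕ₀. -/
def alpha (c : ℕ) (n : ℕ) (x : Fin c → ℕ) : ℕ :=
  (Finset.univ.filter fun i => n < x i).card

def beta (c : ℕ) (n : ℕ) (x : Fin c → ℕ) : ℕ :=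
  ∑ i, (x i - n)

lemma beta_update (c n : ℕ) (z : Fin c → ℕ) (i : Fin c) :
    beta c n (Function.update z i (z i - 1)) + (if n < z i then 1 else 0) = beta c n z := by
  unfold beta
  have h1 : ∀ (w : Fin c → ℕ), ∑ k, (w k - n)
      = (w i - n) + ∑ k ∈ Finset.univ.erase i, (w k - n) :=
    fun w => (Finset.add_sum_erase _ _ (Finset.mem_univ i)).symm
  rw [h1 (Function.update z i (z i - 1)), h1 z]
  have h2 : ∑ k ∈ Finset.univ.erase i, (Function.update z i (z i - 1) k - n)
      = ∑ k ∈ Finset.univ.erase i, (z k - n) := by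
    refine Finset.sum_congr rfl fun k hk => ?_
    rw [Function.update_of_ne (Finset.ne_of_mem_erase hk)]
  rw [h2, Function.update_self]
  split <;> omega

lemma beta_succ (c n : ℕ) (z : Fin c → ℕ) :
    beta c n z = alpha c n z + beta c (n + 1) z := by
  unfold beta alpha
  rw [Finset.card_filter, ← Finset.sum_add_distrib]
  refine Finset.sum_congr rfl fun k _ => ?_
  split <;> omega

lemma alpha_anti (c : ℕ) (z : Fin c → ℕ) {n n' : ℕ} (h : n ≤ n') :
    alpha c n' z ≤ alpha c n z := by
  apply Finset.card_le_card
  intro k hk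
  simp only [Finset.mem_filter, Finset.mem_univ, true_and] at *
  omega

/-- Departure-case preservation of ≼: if `β_n(x) ≤ β_n(y)` for all `n`,
`x' = x - e_i` with `x^i = l ≥ 1`, `y' = y - e_j` with `y^j = m ≥ 1`, and
`α_l(x) < α_{m-1}(y)`, then `β_n(x') ≤ β_n(y')` for all `n`. -/
theorem departure_preserves_preceq (c : ℕ) (hc : 1 ≤ c) (x y : Fin c → ℕ)
    (i j : Fin c) (l m : ℕ)
    (hxy : ∀ n : ℕ, beta c n x ≤ beta c n y)
    (hl : x i = l) (hl1 : 1 ≤ l) (hm : y j = m) (hm1 : 1 ≤ m)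
    (halpha : alpha c l x < alpha c (m - 1) y) :
    ∀ n : ℕ, beta c n (Function.update x i (x i - 1)) ≤
      beta c n (Function.update y j (y j - 1)) := by
  intro n
  have hx := beta_update c n x i
  have hy := beta_update c n y j
  have hbn := hxy n
  by_cases hnm : n < m
  · rw [if_pos (show n < y j by omega)] at hy
    by_cases hnl : n < l
    · rw [if_pos (show n < x i by omega)] at hx
      omega
    · push_neg at hnl
      rw [if_neg (show ¬ n < x i by omega)] at hx
      have h1 : alpha c n x ≤ alpha c l x := alpha_anti c x hnl
      have h2 : alpha c (m - 1) y ≤ alpha c n y := alpha_anti c y (by omega)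
      have h3 := hxy (n + 1)
      have h4 := beta_succ c n x
      have h5 := beta_succ c n y
      omega
  · rw [if_neg (show ¬ n < y j by omega)] at hy
    have : beta c n (Function.update x i (x i - 1)) ≤ beta c n x := by omega
    omega
end

section
/- For x, y ∈ ℕ₀^c, x ∼ y (i.e., β_n(x) = β_n(y) for all n) if and only if the non-decreasing rearrangements of x and y are equal: x́ = ý. -/
lemma beta_step (c n : ℕ) (x : Fin c → ℕ) :
    beta c n x = beta c (n+1) x + (Finset.univ.filter fun i => n < x i).card := by
  unfold beta
  rw [Finset.card_filter, ← Finset.sum_add_distrib]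
  apply Finset.sum_congr rfl
  intro i _
  by_cases h : n < x i <;> simp [h] <;> omega

lemma G_split (c v : ℕ) (x : Fin c → ℕ) :
    (Finset.univ.filter fun i => v ≤ x i).card =
      (Finset.univ.filter fun i => x i = v).card +
      (Finset.univ.filter fun i => v < x i).card := by
  rw [← Finset.card_filter_add_card_filter_not (s := Finset.univ.filter fun i => v ≤ x i)
    (p := fun i => x i = v)]
  rw [Finset.filter_filter, Finset.filter_filter]
  congr 1 <;> apply Finset.card_bij (fun a _ => a) <;> intro a ha <;>
    simp_all <;> omega

lemma multiset_of_beta (c : ℕ) (x y : Fin c → ℕ)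
    (h : ∀ n : ℕ, beta c n x = beta c n y) :
    Multiset.map x Finset.univ.val = Multiset.map y Finset.univ.val := by
  have hcard : ∀ n, (Finset.univ.filter fun i => n < x i).card =
      (Finset.univ.filter fun i => n < y i).card := by
    intro n
    have h1 := beta_step c n x
    have h2 := beta_step c n y
    have := h n
    have := h (n + 1)
    omega
  have hG : ∀ v, (Finset.univ.filter fun i => v ≤ x i).card =
      (Finset.univ.filter fun i => v ≤ y i).card := by
    intro v
    cases v with
    | zero => simp
    | succ m =>
        have := hcard m
        simp only [Nat.succ_le_iff]
        exact this
  have hcount : ∀ v, (Finset.univ.filter fun i => x i = v).card =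
      (Finset.univ.filter fun i => y i = v).card := by
    intro v
    have g1 := G_split c v x
    have g2 := G_split c v y
    have := hG v
    have := hcard v
    omega
  ext a
  rw [Multiset.count_map, Multiset.count_map]
  have : ∀ z : Fin c → ℕ, (Multiset.filter (fun i => a = z i) Finset.univ.val).card =
      (Finset.univ.filter fun i => z i = a).card := by
    intro z
    rw [← Finset.filter_val, ← Finset.card_def]
    congr 1
    ext i
    simp [eq_comm]
  rw [this x, this y, hcount a]

lemma beta_of_multiset (c : ℕ) (x y : Fin c → ℕ)
    (h : Multiset.map x Finset.univ.val = Multiset.map y Finset.univ.val) :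
    ∀ n : ℕ, beta c n x = beta c n y := by
  intro n
  unfold beta
  rw [Finset.sum_eq_multiset_sum, Finset.sum_eq_multiset_sum,
    show (fun i => x i - n) = (fun a => a - n) ∘ x from rfl,
    show (fun i => y i - n) = (fun a => a - n) ∘ y from rfl,
    ← Multiset.map_map (fun a => a - n) x, ← Multiset.map_map (fun a => a - n) y, h]

lemma multiset_comp_perm (c : ℕ) (x : Fin c → ℕ) (σ : Equiv.Perm (Fin c)) :
    Multiset.map (x ∘ σ) Finset.univ.val = Multiset.map x Finset.univ.val := by
  rw [← Multiset.map_map x σ]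
  congr 1
  have : Multiset.map (⇑σ) Finset.univ.val = (Finset.univ.image σ).val := by
    rw [Finset.image_val, Multiset.dedup_eq_self.mpr]
    exact Multiset.Nodup.map σ.injective Finset.univ.nodup
  rw [this, Finset.image_univ_equiv]

lemma ofFn_multiset (c : ℕ) (x : Fin c → ℕ) :
    (↑(List.ofFn x) : Multiset ℕ) = Multiset.map x Finset.univ.val := by
  rw [List.ofFn_eq_map]
  rfl

/-- `x ∼ y` (i.e. `β_n(x) = β_n(y)` for all `n`) iff the non-decreasing
rearrangements of `x` and `y` coincide. -/
theorem indifference_iff_sorted_eq (c : ℕ) (hc : 1 ≤ c) (x y : Fin c → ℕ) :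
    (∀ n : ℕ, beta c n x = beta c n y) ↔
      x ∘ Tuple.sort x = y ∘ Tuple.sort y := by
  constructor
  · intro h
    have hm := multiset_of_beta c x y h
    have hm' : Multiset.map (x ∘ Tuple.sort x) Finset.univ.val =
        Multiset.map (y ∘ Tuple.sort y) Finset.univ.val := by
      rw [multiset_comp_perm, multiset_comp_perm, hm]
    have hperm : (List.ofFn (x ∘ Tuple.sort x)).Perm (List.ofFn (y ∘ Tuple.sort y)) := by
      rw [← Multiset.coe_eq_coe, ofFn_multiset, ofFn_multiset, hm']
    have heq := List.Perm.eq_of_sortedLE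
      ((Tuple.monotone_sort x).sortedLE_ofFn) ((Tuple.monotone_sort y).sortedLE_ofFn) hperm
    exact List.ofFn_injective heq
  · intro h
    apply beta_of_multiset
    have h1 := multiset_comp_perm c x (Tuple.sort x)
    have h2 := multiset_comp_perm c y (Tuple.sort y)
    rw [← h1, ← h2, h]
end
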